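/- Let K be a field, and consider row vectors indexed by ℤ_{>0} with entries in K, i.e. the space V^* of all functions ℤ_{>0} → K, with subspace V_* of finitely supported functions. Let W = V^*/V_*. Similarly let V̄ be all column vectors ℤ_{>0} → K, with subspace V of finitely supported ones, and N = V̄/V. Suppose v_1,…,v_n ∈ W are linearly independent, w_1,…,w_n ∈ N are linearly independent, and v_1',…,v_n' ∈ W, w_1',…,w_n' ∈ N are arbitrary. Then there exists a row-column-finite matrix g (i.e. g : ℤ_{>0}×ℤ_{>0} → K with finitely many nonzero entries in each row and each column) such that, with g acting on W by v ↦ −vg and on N by w ↦ gw, one has g·v_i = v_i' and g·w_i = w_i' for all i = 1,…,n. -/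

import Mathlib

open scoped BigOperators

/-- A matrix is row-column-finite if every row and every column has finite support. -/
def RowColFinite {K : Type*} [Field K] (g : ℕ → ℕ → K) : Prop :=
  (∀ i : ℕ, (Function.support fun j => g i j).Finite) ∧
    (∀ j : ℕ, (Function.support fun i => g i j).Finite)

/-- The subspace of finitely supported vectors inside the space of all vectors. -/
def finSupp (K : Type*) [Field K] : Submodule K (ℕ → K) where
  carrier := {v | (Function.support v).Finite}
  add_mem' := by
    intro a b ha hb
    exact ((ha.union hb).subset (Function.support_add _ _))
  zero_mem' := by simp [Function.support_zero]
  smul_mem' := by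
    intro c v hv
    refine hv.subset fun x hx h => hx ?_
    simp only [Pi.smul_apply, h, smul_zero]

lemma key_surj {K : Type*} [Field K] {n : ℕ} (v : Fin n → (ℕ → K))
    (hv : LinearIndependent K
      (fun i => Submodule.Quotient.mk (p := finSupp K) (v i)))
    (M : ℕ) (b : Fin n → K) :
    ∃ (R : Finset ℕ) (x : ℕ → K), (∀ r ∈ R, M < r) ∧
      ∀ i, ∑ r ∈ R, v i r * x r = b i := by
  classical
  set vec : {r : ℕ // M < r} → (Fin n → K) := fun r => fun i => v i r.1 with hvecdef
  have hspan : Submodule.span K (Set.range vec) = ⊤ := by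
    by_contra h
    obtain ⟨f, hf0, hf⟩ := Submodule.exists_dual_map_eq_bot_of_lt_top
      (p := Submodule.span K (Set.range vec)) (lt_top_iff_ne_top.mpr h) inferInstance
    set c : Fin n → K := fun i => f (Pi.single i 1) with hcdef
    have hfu : ∀ u : Fin n → K, f u = ∑ i, u i * c i := by
      intro u
      conv_lhs => rw [pi_eq_sum_univ u, map_sum]
      refine Finset.sum_congr rfl fun i _ => ?_
      rw [map_smul, smul_eq_mul, hcdef]
      congr 1
      congr 1
      ext j
      simp [Pi.single_apply, eq_comm]
    have hker : ∀ u ∈ Submodule.span K (Set.range vec), f u = 0 := by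
      intro u hu
      have : f u ∈ Submodule.map f (Submodule.span K (Set.range vec)) :=
        Submodule.mem_map_of_mem hu
      rw [hf] at this
      exact (Submodule.mem_bot (R := K)).mp this
    have hcombo : (Function.support fun r => ∑ i, v i r * c i).Finite := by
      refine (Set.finite_Iic M).subset fun r hr => ?_
      by_contra hrM
      apply hr
      have hMr : M < r := by simpa using hrM
      have := hker (vec ⟨r, hMr⟩) (Submodule.subset_span ⟨⟨r, hMr⟩, rfl⟩)
      rw [hfu] at this
      simpa [hvecdef] using this
    have hmk : ∑ i, c i • (Submodule.Quotient.mk (p := finSupp K) (v i)) = 0 := by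
      have : ((finSupp K).mkQ) (∑ i, c i • v i) = ∑ i, c i • ((finSupp K).mkQ (v i)) := by
        rw [map_sum]; simp
      rw [show (Submodule.Quotient.mk (p := finSupp K) : (ℕ → K) → _) = (finSupp K).mkQ from rfl]
      rw [← this, Submodule.mkQ_apply, Submodule.Quotient.mk_eq_zero]
      show (Function.support fun r => (∑ i, c i • v i) r).Finite
      refine hcombo.subset fun r hr => ?_
      intro h0
      apply hr
      simp only [Finset.sum_apply, Pi.smul_apply, smul_eq_mul]
      rw [← h0]
      exact Finset.sum_congr rfl fun i _ => mul_comm _ _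
    have hc0 : ∀ i, c i = 0 := by
      have h2 := Fintype.linearIndependent_iff.mp hv c
      exact h2 hmk
    apply hf0
    refine LinearMap.ext fun u => ?_
    rw [hfu]
    simp [hc0]
  have hb : b ∈ Submodule.span K (Set.range vec) := by rw [hspan]; trivial
  obtain ⟨c, hc⟩ := Finsupp.mem_span_range_iff_exists_finsupp.mp hb
  refine ⟨c.support.image Subtype.val, fun r => if h : M < r then c ⟨r, h⟩ else 0,
    fun r hr => ?_, fun i => ?_⟩
  · obtain ⟨s, _, rfl⟩ := Finset.mem_image.mp hr
    exact s.2
  · rw [Finset.sum_image (fun x _ y _ h => Subtype.ext h)]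
    have : ∀ s ∈ c.support, v i s.1 * (if h : M < s.1 then c ⟨s.1, h⟩ else 0)
        = c s * v i s.1 := by
      intro s _
      rw [dif_pos s.2, mul_comm]
    rw [Finset.sum_congr rfl this]
    have := congrFun hc i
    rw [← this]
    rw [Finsupp.sum]
    simp [hvecdef]

noncomputable def pick {K : Type*} [Field K] {n : ℕ} (v : Fin n → (ℕ → K))
    (hv : LinearIndependent K
      (fun i => Submodule.Quotient.mk (p := finSupp K) (v i)))
    (M : ℕ) (b : Fin n → K) : Finset ℕ × (ℕ → K) :=
  ⟨(key_surj v hv M b).choose, (key_surj v hv M b).choose_spec.choose⟩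

lemma pick_gt {K : Type*} [Field K] {n : ℕ} (v : Fin n → (ℕ → K)) (hv) (M : ℕ)
    (b : Fin n → K) : ∀ r ∈ (pick v hv M b).1, M < r :=
  (key_surj v hv M b).choose_spec.choose_spec.1

lemma pick_sum {K : Type*} [Field K] {n : ℕ} (v : Fin n → (ℕ → K)) (hv) (M : ℕ)
    (b : Fin n → K) : ∀ i, ∑ r ∈ (pick v hv M b).1, v i r * (pick v hv M b).2 r = b i :=
  (key_surj v hv M b).choose_spec.choose_spec.2

noncomputable def data {K : Type*} [Field K] {n : ℕ} (v w : Fin n → (ℕ → K))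
    (hv : LinearIndependent K
      (fun i => Submodule.Quotient.mk (p := finSupp K) (v i)))
    (hw : LinearIndependent K
      (fun i => Submodule.Quotient.mk (p := finSupp K) (w i)))
    (v' w' : Fin n → (ℕ → K)) :
    ℕ → (Finset ℕ × (ℕ → K)) × (Finset ℕ × (ℕ → K))
  | t =>
    (pick v hv t (fun i => -(v' i t) - ∑ s ∈ Finset.range t,
        if h : s < t then
          (if t ∈ (data v w hv hw v' w' s).2.1 then v i s * (data v w hv hw v' w' s).2.2 t
            else 0)
        else 0),
     pick w hw t (fun i => w' i t - ∑ s ∈ Finset.range t,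
        if h : s < t then
          (if t ∈ (data v w hv hw v' w' s).1.1 then (data v w hv hw v' w' s).1.2 t * w i s
            else 0)
        else 0))
  termination_by t => t

section main

variable {K : Type*} [Field K] {n : ℕ} (v w : Fin n → (ℕ → K))
    (hv : LinearIndependent K
      (fun i => Submodule.Quotient.mk (p := finSupp K) (v i)))
    (hw : LinearIndependent K
      (fun i => Submodule.Quotient.mk (p := finSupp K) (w i)))
    (v' w' : Fin n → (ℕ → K))

lemma data_eq (t : ℕ) : data v w hv hw v' w' t =
    (pick v hv t (fun i => -(v' i t) - ∑ s ∈ Finset.range t,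
        (if t ∈ (data v w hv hw v' w' s).2.1 then v i s * (data v w hv hw v' w' s).2.2 t
          else 0)),
     pick w hw t (fun i => w' i t - ∑ s ∈ Finset.range t,
        (if t ∈ (data v w hv hw v' w' s).1.1 then (data v w hv hw v' w' s).1.2 t * w i s
          else 0))) := by
  rw [data]
  congr 2
  · funext i
    congr 1
    refine Finset.sum_congr rfl fun s hs => ?_
    rw [dif_pos (Finset.mem_range.mp hs)]
  · funext i
    congr 1
    refine Finset.sum_congr rfl fun s hs => ?_
    rw [dif_pos (Finset.mem_range.mp hs)]

end main

theorem stmt_3' (K : Type*) [Field K] (n : ℕ)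
    (v v' w w' : Fin n → (ℕ → K))
    (hv : LinearIndependent K
      (fun i => Submodule.Quotient.mk (p := finSupp K) (v i)))
    (hw : LinearIndependent K
      (fun i => Submodule.Quotient.mk (p := finSupp K) (w i))) :
    ∃ g : ℕ → ℕ → K,
      ((∀ i : ℕ, (Function.support fun j => g i j).Finite) ∧
        (∀ j : ℕ, (Function.support fun i => g i j).Finite)) ∧
      (∀ i : Fin n,
        Submodule.Quotient.mk (p := finSupp K) (fun j => -(∑ᶠ k : ℕ, v i k * g k j)) =
          Submodule.Quotient.mk (p := finSupp K) (v' i)) ∧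
      (∀ i : Fin n,
        Submodule.Quotient.mk (p := finSupp K) (fun k => ∑ᶠ j : ℕ, g k j * w i j) =
          Submodule.Quotient.mk (p := finSupp K) (w' i)) := by
  classical
  set D := data v w hv hw v' w' with hD
  have hRgt : ∀ t, ∀ r ∈ (D t).1.1, t < r := by
    intro t
    rw [hD, data_eq]
    exact pick_gt v hv t _
  have hCgt : ∀ t, ∀ c ∈ (D t).2.1, t < c := by
    intro t
    rw [hD, data_eq]
    exact pick_gt w hw t _
  have hRsum : ∀ t i, ∑ r ∈ (D t).1.1, v i r * (D t).1.2 r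
      = -(v' i t) - ∑ s ∈ Finset.range t,
          (if t ∈ (D s).2.1 then v i s * (D s).2.2 t else 0) := by
    intro t i
    rw [hD, data_eq]
    exact pick_sum v hv t _ i
  have hCsum : ∀ t i, ∑ c ∈ (D t).2.1, w i c * (D t).2.2 c
      = w' i t - ∑ s ∈ Finset.range t,
          (if t ∈ (D s).1.1 then (D s).1.2 t * w i s else 0) := by
    intro t i
    rw [hD, data_eq]
    exact pick_sum w hw t _ i
  set g : ℕ → ℕ → K := fun k j =>
    (if k ∈ (D j).1.1 then (D j).1.2 k else 0) +
      (if j ∈ (D k).2.1 then (D k).2.2 j else 0) with hg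
  -- supports
  have hrow : ∀ k, (Function.support fun j => g k j) ⊆
      (((D k).2.1 ∪ Finset.range k : Finset ℕ) : Set ℕ) := by
    intro k j hj
    simp only [Function.mem_support] at hj
    simp only [Finset.coe_union, Set.mem_union, Finset.mem_coe, Finset.coe_range,
      Set.mem_Iio]
    by_contra hjn
    push_neg at hjn
    apply hj
    have h1 : k ∉ (D j).1.1 := fun h => absurd (hRgt j k h) (not_lt.mpr hjn.2)
    simp only [hg]
    rw [if_neg h1, if_neg hjn.1, add_zero]
  have hcol : ∀ j, (Function.support fun k => g k j) ⊆
      (((D j).1.1 ∪ Finset.range j : Finset ℕ) : Set ℕ) := by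
    intro j k hk
    simp only [Function.mem_support] at hk
    simp only [Finset.coe_union, Set.mem_union, Finset.mem_coe, Finset.coe_range,
      Set.mem_Iio]
    by_contra hkn
    push_neg at hkn
    apply hk
    have h1 : j ∉ (D k).2.1 := fun h => absurd (hCgt k j h) (not_lt.mpr hkn.2)
    simp only [hg]
    rw [if_neg h1, if_neg hkn.1, add_zero]
  refine ⟨g, ⟨fun k => (((D k).2.1 ∪ Finset.range k : Finset ℕ).finite_toSet).subset (hrow k),
      fun j => (((D j).1.1 ∪ Finset.range j : Finset ℕ).finite_toSet).subset (hcol j)⟩,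
      ?_, ?_⟩
  · -- column equations
    intro i
    have key : ∀ j, ∑ᶠ k : ℕ, v i k * g k j = -(v' i j) := by
      intro j
      have hsupp : (Function.support fun k => v i k * g k j) ⊆
          (((D j).1.1 ∪ Finset.range j : Finset ℕ) : Set ℕ) := by
        intro k hk
        refine hcol j ?_
        simp only [Function.mem_support] at hk ⊢
        intro h0
        exact hk (by rw [h0, mul_zero])
      rw [finsum_eq_finset_sum_of_support_subset _ hsupp]
      have expand : ∀ k ∈ ((D j).1.1 ∪ Finset.range j : Finset ℕ), v i k * g k j =
          (if k ∈ (D j).1.1 then v i k * (D j).1.2 k else 0) +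
            (if j ∈ (D k).2.1 then v i k * (D k).2.2 j else 0) := by
        intro k _
        simp only [hg]
        simp only [mul_add, mul_ite, mul_zero]
      rw [Finset.sum_congr rfl expand, Finset.sum_add_distrib]
      have e1 : ∑ k ∈ ((D j).1.1 ∪ Finset.range j : Finset ℕ),
          (if k ∈ (D j).1.1 then v i k * (D j).1.2 k else 0)
          = ∑ k ∈ (D j).1.1, v i k * (D j).1.2 k := by
        rw [Finset.sum_ite_mem, Finset.inter_eq_right.mpr Finset.subset_union_left]
      have e2 : ∑ k ∈ ((D j).1.1 ∪ Finset.range j : Finset ℕ),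
          (if j ∈ (D k).2.1 then v i k * (D k).2.2 j else 0)
          = ∑ k ∈ Finset.range j, (if j ∈ (D k).2.1 then v i k * (D k).2.2 j else 0) := by
        refine (Finset.sum_subset Finset.subset_union_right fun k _ hk => ?_).symm
        rw [if_neg]
        intro h
        exact hk (Finset.mem_range.mpr (hCgt k j h))
      rw [e1, e2, hRsum j i]
      ring
    rw [show (fun j => -(∑ᶠ k : ℕ, v i k * g k j)) = v' i from
      funext fun j => by rw [key j, neg_neg]]
  · -- row equations
    intro i
    have key : ∀ k, ∑ᶠ j : ℕ, g k j * w i j = w' i k := by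
      intro k
      have hsupp : (Function.support fun j => g k j * w i j) ⊆
          (((D k).2.1 ∪ Finset.range k : Finset ℕ) : Set ℕ) := by
        intro j hj
        refine hrow k ?_
        simp only [Function.mem_support] at hj ⊢
        intro h0
        exact hj (by rw [h0, zero_mul])
      rw [finsum_eq_finset_sum_of_support_subset _ hsupp]
      have expand : ∀ j ∈ ((D k).2.1 ∪ Finset.range k : Finset ℕ), g k j * w i j =
          (if j ∈ (D k).2.1 then (D k).2.2 j * w i j else 0) +
            (if k ∈ (D j).1.1 then (D j).1.2 k * w i j else 0) := by
        intro j _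
        simp only [hg]
        rw [add_comm (if k ∈ (D j).1.1 then (D j).1.2 k else 0)]
        simp only [add_mul, ite_mul, zero_mul]
      rw [Finset.sum_congr rfl expand, Finset.sum_add_distrib]
      have e1 : ∑ j ∈ ((D k).2.1 ∪ Finset.range k : Finset ℕ),
          (if j ∈ (D k).2.1 then (D k).2.2 j * w i j else 0)
          = ∑ j ∈ (D k).2.1, w i j * (D k).2.2 j := by
        rw [Finset.sum_ite_mem, Finset.inter_eq_right.mpr Finset.subset_union_left]
        exact Finset.sum_congr rfl fun j _ => mul_comm _ _
      have e2 : ∑ j ∈ ((D k).2.1 ∪ Finset.range k : Finset ℕ),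
          (if k ∈ (D j).1.1 then (D j).1.2 k * w i j else 0)
          = ∑ j ∈ Finset.range k, (if k ∈ (D j).1.1 then (D j).1.2 k * w i j else 0) := by
        refine (Finset.sum_subset Finset.subset_union_right fun j _ hj => ?_).symm
        rw [if_neg]
        intro h
        exact hj (Finset.mem_range.mpr (hRgt j k h))
      rw [e1, e2, hCsum k i]
      ring
    rw [show (fun k => ∑ᶠ j : ℕ, g k j * w i j) = w' i from funext fun k => key k]

/-- Given linearly independent images `v₁,…,vₙ` in `W = V^*/V_*` and `w₁,…,wₙ` in
`N = V̄/V`, and arbitrary targets `v₁',…,vₙ'` and `w₁',…,wₙ'`, there is a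
row-column-finite matrix `g`, acting on `W` by `v ↦ -vg` and on `N` by `w ↦ gw`,
with `g·vᵢ = vᵢ'` and `g·wᵢ = wᵢ'` for all `i`. -/
theorem stmt_3 (K : Type*) [Field K] (n : ℕ)
    (v v' w w' : Fin n → (ℕ → K))
    (hv : LinearIndependent K
      (fun i => Submodule.Quotient.mk (p := finSupp K) (v i)))
    (hw : LinearIndependent K
      (fun i => Submodule.Quotient.mk (p := finSupp K) (w i))) :
    ∃ g : ℕ → ℕ → K, RowColFinite g ∧
      (∀ i : Fin n,
        Submodule.Quotient.mk (p := finSupp K) (fun j => -(∑ᶠ k : ℕ, v i k * g k j)) =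
          Submodule.Quotient.mk (p := finSupp K) (v' i)) ∧
      (∀ i : Fin n,
        Submodule.Quotient.mk (p := finSupp K) (fun k => ∑ᶠ j : ℕ, g k j * w i j) =
          Submodule.Quotient.mk (p := finSupp K) (w' i)) := by
  obtain ⟨g, hfin, h1, h2⟩ := stmt_3' K n v v' w w' hv hw
  exact ⟨g, ⟨hfin.1, hfin.2⟩, h1, h2⟩
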